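/- arXiv:0706.0403 — 3 statements merged into one kernel-verified Lean document; each statement's English description precedes it below -/
import Mathlib

section
/- Let G be a distribution on (0,∞) with density g, finite positive mean E[U] with μ = 1/E[U], and unbounded support (Ḡ(t) > 0 for all t). For each t > 0 with G(t) > 0, let γ(t) be the unique positive root of ∫_0^t e^{γ y} g(y) dy = 1. Then γ(t) ~ μ Ḡ(t) as t → ∞. -/
open MeasureTheory ProbabilityTheory Filter Real Set


lemma aux_exp_lb (x : ℝ) : x ≤ Real.exp x - 1 := by
  have := Real.add_one_le_exp x; linarith

lemma aux_exp_ub (x : ℝ) : Real.exp x - 1 ≤ x * Real.exp x := by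
  have h1 : (-x) + 1 ≤ Real.exp (-x) := Real.add_one_le_exp (-x)
  have h2 : 0 < Real.exp x := Real.exp_pos x
  have h3 : Real.exp (-x) * Real.exp x = 1 := by
    rw [← Real.exp_add]; simp
  nlinarith [mul_le_mul_of_nonneg_right h1 h2.le]

set_option maxHeartbeats 1000000 in
/-- Lemma 4.1: for a distribution on `(0,∞)` with density `g`, finite
positive mean `1/μ` and unbounded support, the Cramér root `γ(t)` of the distribution
truncated to `[0,t]` satisfies `γ(t) ∼ μ Ḡ(t)` as `t → ∞`. -/
theorem cramer_root_asymptotics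
    -- `g` is a probability density on `(0,∞)`
    (g : ℝ → ℝ) (hgmeas : Measurable g) (hgnn : ∀ y, 0 ≤ g y)
    (hgsupp : ∀ y : ℝ, y ≤ 0 → g y = 0)
    (hgprob : ∫ y in Set.Ioi (0:ℝ), g y = 1)
    (hgint : IntegrableOn g (Set.Ioi 0))
    -- finite positive mean `E U = 1/μ`
    (hmeanint : IntegrableOn (fun y => y * g y) (Set.Ioi 0))
    (μ : ℝ) (hμpos : 0 < μ) (hμ : ∫ y in Set.Ioi (0:ℝ), y * g y = 1 / μ)
    -- the tail `Ḡ`, positive everywhere (unbounded support)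
    (Gbar : ℝ → ℝ) (hGbar : ∀ t, Gbar t = ∫ y in Set.Ioi t, g y)
    (hGbarpos : ∀ t : ℝ, 0 < Gbar t)
    -- `γ t` is the unique positive root of `∫_0^t e^{γ y} g(y) dy = 1`
    (γ : ℝ → ℝ)
    (hγ : ∀ t : ℝ, 0 < t → 0 < γ t ∧
      ∫ y in Set.Ioc (0:ℝ) t, Real.exp (γ t * y) * g y = 1 ∧
      ∀ c : ℝ, 0 < c → (∫ y in Set.Ioc (0:ℝ) t, Real.exp (c * y) * g y = 1) → c = γ t) :
    Tendsto (fun t => γ t / (μ * Gbar t)) atTop (nhds 1) := by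
  set I : ℝ → ℝ := fun t => ∫ y in Set.Ioc (0:ℝ) t, y * g y with hI
  -- basic integrability on subsets
  have hsub : ∀ t : ℝ, 0 < t → Set.Ioc (0:ℝ) t ⊆ Set.Ioi 0 := fun t ht => Set.Ioc_subset_Ioi_self
  have hg_Ioc : ∀ t : ℝ, IntegrableOn g (Set.Ioc 0 t) :=
    fun t => hgint.mono_set Set.Ioc_subset_Ioi_self
  have hyg_Ioc : ∀ t : ℝ, IntegrableOn (fun y => y * g y) (Set.Ioc 0 t) :=
    fun t => hmeanint.mono_set Set.Ioc_subset_Ioi_self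
  have hg_Ioi : ∀ t : ℝ, 0 < t → IntegrableOn g (Set.Ioi t) :=
    fun t ht => hgint.mono_set (Set.Ioi_subset_Ioi ht.le)
  have hyg_Ioi : ∀ t : ℝ, 0 < t → IntegrableOn (fun y => y * g y) (Set.Ioi t) :=
    fun t ht => hmeanint.mono_set (Set.Ioi_subset_Ioi ht.le)
  -- splitting lemmas
  have hGsplit : ∀ t : ℝ, 0 < t → (∫ y in Set.Ioc (0:ℝ) t, g y) = 1 - Gbar t := by
    intro t ht
    have h := MeasureTheory.setIntegral_union (Set.Ioc_disjoint_Ioi le_rfl)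
      measurableSet_Ioi (hg_Ioc t) (hg_Ioi t ht) (f := g) (μ := volume)
    rw [Set.Ioc_union_Ioi_eq_Ioi ht.le] at h
    rw [hgprob] at h
    rw [hGbar]; linarith
  have hIsplit : ∀ t : ℝ, 0 < t → (∫ y in Set.Ioi t, y * g y) = 1 / μ - I t := by
    intro t ht
    have h := MeasureTheory.setIntegral_union (Set.Ioc_disjoint_Ioi le_rfl)
      measurableSet_Ioi (hyg_Ioc t) (hyg_Ioi t ht) (f := fun y => y * g y) (μ := volume)
    rw [Set.Ioc_union_Ioi_eq_Ioi ht.le] at h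
    rw [hμ] at h
    simp only [hI]; linarith
  -- integrability of exp(γ t * y) * g y on Ioc 0 t
  have hexp_Ioc : ∀ t : ℝ, 0 < t →
      IntegrableOn (fun y => Real.exp (γ t * y) * g y) (Set.Ioc 0 t) := by
    intro t ht
    refine Integrable.mono' ((hg_Ioc t).const_mul (Real.exp (γ t * t))) ?_ ?_
    · exact ((Real.measurable_exp.comp (measurable_const.mul measurable_id)).mul
        hgmeas).aestronglyMeasurable
    · filter_upwards [ae_restrict_mem measurableSet_Ioc] with y hy
      have hγt := (hγ t ht).1
      have h1 : Real.exp (γ t * y) ≤ Real.exp (γ t * t) :=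
        Real.exp_le_exp.2 (mul_le_mul_of_nonneg_left hy.2 hγt.le)
      have := hgnn y
      rw [Real.norm_eq_abs, abs_of_nonneg (by positivity)]
      exact mul_le_mul_of_nonneg_right h1 this
  -- Lemma A : γ t * I t ≤ Gbar t
  have hA : ∀ t : ℝ, 0 < t → γ t * I t ≤ Gbar t := by
    intro t ht
    obtain ⟨hγpos, hroot, -⟩ := hγ t ht
    have key : (∫ y in Set.Ioc (0:ℝ) t, γ t * (y * g y)) ≤
        ∫ y in Set.Ioc (0:ℝ) t, (Real.exp (γ t * y) * g y - g y) := by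
      refine MeasureTheory.setIntegral_mono_on ((hyg_Ioc t).const_mul _)
        ((hexp_Ioc t ht).sub (hg_Ioc t)) measurableSet_Ioc ?_
      intro y hy
      have h1 : γ t * y ≤ Real.exp (γ t * y) - 1 := aux_exp_lb _
      have := hgnn y
      nlinarith
    rw [MeasureTheory.integral_const_mul,
      MeasureTheory.integral_sub (hexp_Ioc t ht) (hg_Ioc t), hroot,
      hGsplit t ht] at key
    linarith
  -- Lemma B : Gbar t ≤ γ t * exp (γ t * t) * I t
  have hB : ∀ t : ℝ, 0 < t → Gbar t ≤ γ t * Real.exp (γ t * t) * I t := by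
    intro t ht
    obtain ⟨hγpos, hroot, -⟩ := hγ t ht
    have key : (∫ y in Set.Ioc (0:ℝ) t, (Real.exp (γ t * y) * g y - g y)) ≤
        ∫ y in Set.Ioc (0:ℝ) t, (γ t * Real.exp (γ t * t)) * (y * g y) := by
      refine MeasureTheory.setIntegral_mono_on ((hexp_Ioc t ht).sub (hg_Ioc t))
        ((hyg_Ioc t).const_mul _) measurableSet_Ioc ?_
      intro y hy
      have h1 : Real.exp (γ t * y) - 1 ≤ (γ t * y) * Real.exp (γ t * y) := aux_exp_ub _
      have h2 : Real.exp (γ t * y) ≤ Real.exp (γ t * t) :=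
        Real.exp_le_exp.2 (mul_le_mul_of_nonneg_left hy.2 hγpos.le)
      have hgy := hgnn y
      have hy1 := hy.1
      calc Real.exp (γ t * y) * g y - g y = (Real.exp (γ t * y) - 1) * g y := by ring
        _ ≤ (γ t * y * Real.exp (γ t * y)) * g y := mul_le_mul_of_nonneg_right h1 hgy
        _ ≤ (γ t * y * Real.exp (γ t * t)) * g y := by
            refine mul_le_mul_of_nonneg_right ?_ hgy
            exact mul_le_mul_of_nonneg_left h2 (by positivity)
        _ = γ t * Real.exp (γ t * t) * (y * g y) := by ring
    rw [MeasureTheory.integral_const_mul,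
      MeasureTheory.integral_sub (hexp_Ioc t ht) (hg_Ioc t), hroot,
      hGsplit t ht] at key
    linarith
  -- I t → 1/μ
  have hI_tendsto : Tendsto I atTop (nhds (1 / μ)) := by
    have h := MeasureTheory.intervalIntegral_tendsto_integral_Ioi 0 hmeanint
      (tendsto_id (α := ℝ))
    rw [hμ] at h
    refine h.congr' ?_
    filter_upwards [eventually_ge_atTop (0:ℝ)] with t ht
    simp only [id, intervalIntegral.integral_of_le ht, hI]
  -- I t eventually positive
  have hIpos : ∀ᶠ t in atTop, 0 < I t :=
    hI_tendsto.eventually (eventually_gt_nhds (by positivity))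
  -- t * Gbar t → 0
  have htG_le : ∀ t : ℝ, 0 < t → t * Gbar t ≤ 1 / μ - I t := by
    intro t ht
    have key : (∫ y in Set.Ioi t, t * g y) ≤ ∫ y in Set.Ioi t, y * g y := by
      refine MeasureTheory.setIntegral_mono_on ((hg_Ioi t ht).const_mul _)
        (hyg_Ioi t ht) measurableSet_Ioi ?_
      intro y hy
      exact mul_le_mul_of_nonneg_right (le_of_lt hy) (hgnn y)
    rw [MeasureTheory.integral_const_mul, hIsplit t ht] at key
    rw [hGbar]; exact key
  have htG : Tendsto (fun t => t * Gbar t) atTop (nhds 0) := by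
    have hub : Tendsto (fun t => 1 / μ - I t) atTop (nhds 0) := by
      have := (tendsto_const_nhds (x := 1/μ) (f := atTop (α := ℝ))).sub hI_tendsto
      simpa using this
    refine tendsto_of_tendsto_of_tendsto_of_le_of_le' tendsto_const_nhds hub ?_ ?_
    · filter_upwards [eventually_gt_atTop (0:ℝ)] with t ht
      exact le_of_lt (mul_pos ht (hGbarpos t))
    · filter_upwards [eventually_gt_atTop (0:ℝ)] with t ht
      exact htG_le t ht
  -- γ t * t → 0
  have hγt_tendsto : Tendsto (fun t => γ t * t) atTop (nhds 0) := by
    have hub : Tendsto (fun t => t * Gbar t / I t) atTop (nhds 0) := by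
      have := htG.div hI_tendsto (by positivity)
      simpa using (show Tendsto (fun t => t * Gbar t / I t) atTop (nhds (0 / (1 / μ))) from this)
    refine tendsto_of_tendsto_of_tendsto_of_le_of_le' tendsto_const_nhds hub ?_ ?_
    · filter_upwards [eventually_gt_atTop (0:ℝ)] with t ht
      exact le_of_lt (mul_pos (hγ t ht).1 ht)
    · filter_upwards [eventually_gt_atTop (0:ℝ), hIpos] with t ht hIt
      have hAt := hA t ht
      rw [le_div_iff₀ hIt]
      nlinarith [mul_le_mul_of_nonneg_right hAt ht.le]
  -- exp(-(γ t * t)) → 1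
  have hexp1 : Tendsto (fun t => Real.exp (-(γ t * t))) atTop (nhds 1) := by
    have : Tendsto (fun t => -(γ t * t)) atTop (nhds 0) := by simpa using hγt_tendsto.neg
    have := (Real.continuous_exp.tendsto 0).comp this
    simpa using (show Tendsto (fun t => Real.exp (-(γ t * t))) atTop (nhds (Real.exp 0)) from this)
  -- 1/(μ * I t) → 1
  have hinv : Tendsto (fun t => 1 / (μ * I t)) atTop (nhds 1) := by
    have h1 : Tendsto (fun t => μ * I t) atTop (nhds (μ * (1 / μ))) :=
      tendsto_const_nhds.mul hI_tendsto
    have h2 : μ * (1 / μ) = 1 := by field_simp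
    rw [h2] at h1
    have := h1.inv₀ one_ne_zero
    simpa [one_div] using this
  -- final squeeze
  have hlb : Tendsto (fun t => Real.exp (-(γ t * t)) * (1 / (μ * I t))) atTop (nhds 1) := by
    have := hexp1.mul hinv
    simpa using this
  refine tendsto_of_tendsto_of_tendsto_of_le_of_le' hlb hinv ?_ ?_
  · -- lower bound
    filter_upwards [eventually_gt_atTop (0:ℝ), hIpos] with t ht hIt
    have hBt := hB t ht
    have hγpos := (hγ t ht).1
    have hGpos := hGbarpos t
    have hepos := Real.exp_pos (γ t * t)
    have hene : Real.exp (-(γ t * t)) * Real.exp (γ t * t) = 1 := by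
      rw [← Real.exp_add]; simp
    rw [mul_one_div, div_le_div_iff₀ (by positivity) (by positivity)]
    have h3 : Real.exp (-(γ t * t)) * Gbar t ≤ γ t * I t := by
      have := mul_le_mul_of_nonneg_left hBt (le_of_lt (Real.exp_pos (-(γ t * t))))
      calc Real.exp (-(γ t * t)) * Gbar t
          ≤ Real.exp (-(γ t * t)) * (γ t * Real.exp (γ t * t) * I t) := this
        _ = (Real.exp (-(γ t * t)) * Real.exp (γ t * t)) * (γ t * I t) := by ring
        _ = γ t * I t := by rw [hene]; ring
    nlinarith [mul_le_mul_of_nonneg_left h3 hμpos.le]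
  · -- upper bound
    filter_upwards [eventually_gt_atTop (0:ℝ), hIpos] with t ht hIt
    have hAt := hA t ht
    have hGpos := hGbarpos t
    rw [div_le_div_iff₀ (by positivity) (by positivity)]
    nlinarith [mul_le_mul_of_nonneg_left hAt hμpos.le]
end

section
/- For fixed constants a, b, γ, η > 0 and t_0 > 0, the integral I(z) = ∫_{t_0}^∞ exp(−e^{−b t^γ} z − a t^η) dt satisfies I(z) ≈_log exp(−a b^{−η/γ} (log z)^{η/γ}) as z → ∞, i.e. log I(z) / (−a b^{−η/γ} (log z)^{η/γ}) → 1 as z → ∞. -/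
open MeasureTheory ProbabilityTheory Filter Real Set

lemma integrableOn_exp_neg_mul_rpow_aux {c p : ℝ} (hc : 0 < c) (hp : 0 < p) :
    IntegrableOn (fun x : ℝ => Real.exp (-(c * x ^ p))) (Set.Ioi 0) := by
  have h := integrableOn_Ioi_comp_rpow_iff' (E := ℝ)
    (fun x : ℝ => Real.exp (-(c * x ^ p))) (p := 1/p) (one_div_ne_zero hp.ne')
  rw [← h]
  have h2 : IntegrableOn (fun x : ℝ => x ^ (1/p - 1) * Real.exp (-c * x ^ (1:ℝ))) (Set.Ioi 0) :=
    integrableOn_rpow_mul_exp_neg_mul_rpow (by simp [hp, one_div_pos.mpr hp]) one_pos hc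
  refine h2.congr_fun (fun x hx => ?_) measurableSet_Ioi
  have hx0 : (0:ℝ) < x := hx
  simp only [smul_eq_mul, ← Real.rpow_mul hx0.le, one_div_mul_cancel hp.ne',
    Real.rpow_one, neg_mul]

lemma f_integrableOn {a b γ η z t₀ : ℝ} (ha : 0 < a) (hη : 0 < η) (hz : 0 ≤ z)
    (ht₀ : 0 ≤ t₀) :
    IntegrableOn (fun t : ℝ => Real.exp (-(Real.exp (-(b * t ^ γ)) * z) - a * t ^ η))
      (Set.Ioi t₀) := by
  have hdom : IntegrableOn (fun t : ℝ => Real.exp (-(a * t ^ η))) (Set.Ioi t₀) :=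
    (integrableOn_exp_neg_mul_rpow_aux ha hη).mono_set (Ioi_subset_Ioi ht₀)
  refine hdom.mono' ?_ ?_
  · exact ((by fun_prop : Measurable (fun t : ℝ =>
      Real.exp (-(Real.exp (-(b * t ^ γ)) * z) - a * t ^ η)))).aestronglyMeasurable
  · filter_upwards with t
    rw [Real.norm_eq_abs, abs_of_pos (Real.exp_pos _)]
    apply Real.exp_le_exp.mpr
    have : 0 ≤ Real.exp (-(b * t ^ γ)) * z := mul_nonneg (Real.exp_pos _).le hz
    linarith

lemma lower_bound {a b γ η t₀ z : ℝ} (ha : 0 < a) (hb : 0 < b) (hγ : 0 < γ) (hη : 0 < η)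
    (ht₀ : 0 < t₀) (hz : 1 ≤ z) (hT : t₀ ≤ (Real.log z / b) ^ (1/γ)) :
    Real.exp (-1 - a * ((Real.log z / b) ^ (1/γ) + 1) ^ η)
      ≤ ∫ t in Set.Ioi t₀, Real.exp (-(Real.exp (-(b * t ^ γ)) * z) - a * t ^ η) := by
  set l := Real.log z with hl_def
  set T := (l / b) ^ (1/γ) with hT_def
  have hz0 : (0:ℝ) < z := lt_of_lt_of_le one_pos hz
  have hl : 0 ≤ l := Real.log_nonneg hz
  have hT0 : 0 < T := lt_of_lt_of_le ht₀ hT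
  have hkey : b * T ^ γ = l := by
    rw [hT_def, ← Real.rpow_mul (div_nonneg hl hb.le), one_div,
      inv_mul_cancel₀ hγ.ne', Real.rpow_one, mul_div_cancel₀ _ hb.ne']
  have hint : IntegrableOn
      (fun t : ℝ => Real.exp (-(Real.exp (-(b * t ^ γ)) * z) - a * t ^ η))
      (Set.Ioi t₀) := f_integrableOn ha hη hz0.le ht₀.le
  have step1 : (∫ t in Set.Ioc T (T+1),
        Real.exp (-(Real.exp (-(b * t ^ γ)) * z) - a * t ^ η))
      ≤ ∫ t in Set.Ioi t₀, Real.exp (-(Real.exp (-(b * t ^ γ)) * z) - a * t ^ η) := by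
    refine setIntegral_mono_set hint ?_ ?_
    · filter_upwards with t using (Real.exp_pos _).le
    · refine HasSubset.Subset.eventuallyLE ?_
      intro t ht
      exact lt_of_le_of_lt hT ht.1
  refine le_trans ?_ step1
  have hconst : ∀ t ∈ Set.Ioc T (T+1),
      Real.exp (-1 - a * (T + 1) ^ η)
        ≤ Real.exp (-(Real.exp (-(b * t ^ γ)) * z) - a * t ^ η) := by
    intro t ht
    apply Real.exp_le_exp.mpr
    have h1 : Real.exp (-(b * t ^ γ)) * z ≤ 1 := by
      have hbt : b * T ^ γ ≤ b * t ^ γ :=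
        mul_le_mul_of_nonneg_left (Real.rpow_le_rpow hT0.le ht.1.le hγ.le) hb.le
      have : Real.exp (-(b * t ^ γ)) ≤ Real.exp (-l) := by
        rw [Real.exp_le_exp, ← hkey]; linarith
      calc Real.exp (-(b * t ^ γ)) * z ≤ Real.exp (-l) * z :=
            mul_le_mul_of_nonneg_right this hz0.le
        _ = 1 := by
            rw [hl_def, Real.exp_neg, Real.exp_log hz0, inv_mul_cancel₀ hz0.ne']
    have h2 : a * t ^ η ≤ a * (T + 1) ^ η :=
      mul_le_mul_of_nonneg_left
        (Real.rpow_le_rpow (le_trans hT0.le ht.1.le) ht.2 hη.le) ha.le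
    linarith
  have hmeas : MeasurableSet (Set.Ioc T (T+1)) := measurableSet_Ioc
  have hvol : (volume (Set.Ioc T (T+1))).toReal = 1 := by
    rw [Real.volume_Ioc]
    simp
  have := setIntegral_ge_of_const_le hmeas (by simp [Real.volume_Ioc]) hconst
    (hint.mono_set (fun t ht => lt_of_le_of_lt hT ht.1))
  rw [measureReal_def, hvol, one_smul] at this
  exact this

lemma upper_bound {a b γ η t₀ z M : ℝ} (ha : 0 < a) (hb : 0 < b) (hγ : 0 < γ) (hη : 0 < η)
    (ht₀ : 0 < t₀) (hz : 1 ≤ z) (hM : 0 ≤ M)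
    (hTd : b * t₀ ^ γ < Real.log z - M)
    (hE : a * ((Real.log z / b) ^ (1/γ)) ^ η + Real.log ((Real.log z / b) ^ (1/γ))
        ≤ Real.exp M) :
    (∫ t in Set.Ioi t₀, Real.exp (-(Real.exp (-(b * t ^ γ)) * z) - a * t ^ η))
      ≤ (1 + (Real.log z / b) ^ (1/γ)
          + ∫ t in Set.Ioi (0:ℝ), Real.exp (-(a * (1 - 2^(-η)) * t ^ η)))
        * Real.exp (-(a * (((Real.log z - M) / b) ^ (1/γ)) ^ η)) := by
  have hz0 : (0:ℝ) < z := lt_of_lt_of_le one_pos hz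
  set l := Real.log z with hl_def
  set T := (l / b) ^ (1/γ) with hT_def
  set Td := ((l - M) / b) ^ (1/γ) with hTd_def
  set c₀ := a * (1 - 2^(-η)) with hc₀_def
  set C := ∫ t in Set.Ioi (0:ℝ), Real.exp (-(c₀ * t ^ η)) with hC_def
  set f := fun t : ℝ => Real.exp (-(Real.exp (-(b * t ^ γ)) * z) - a * t ^ η) with hf_def
  have hlM : 0 < l - M := lt_trans (by positivity) hTd
  have hl0 : 0 < l := lt_of_lt_of_le hlM (by linarith)
  have hc₀ : 0 < c₀ := by
    have : (2:ℝ) ^ (-η) < 1 := Real.rpow_lt_one_of_one_lt_of_neg one_lt_two (by linarith)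
    have : (0:ℝ) < 1 - 2^(-η) := by linarith
    positivity
  have hC0 : 0 ≤ C := setIntegral_nonneg measurableSet_Ioi (fun t _ => (Real.exp_pos _).le)
  have hCint : IntegrableOn (fun t : ℝ => Real.exp (-(c₀ * t ^ η))) (Set.Ioi 0) :=
    integrableOn_exp_neg_mul_rpow_aux hc₀ hη
  have hkeyd : b * Td ^ γ = l - M := by
    rw [hTd_def, ← Real.rpow_mul (div_nonneg hlM.le hb.le), one_div,
      inv_mul_cancel₀ hγ.ne', Real.rpow_one, mul_div_cancel₀ _ hb.ne']
  have hTd0 : t₀ < Td := by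
    by_contra h
    push_neg at h
    have : b * Td ^ γ ≤ b * t₀ ^ γ :=
      mul_le_mul_of_nonneg_left
        (Real.rpow_le_rpow (Real.rpow_nonneg (div_nonneg hlM.le hb.le) _) h hγ.le) hb.le
    rw [hkeyd] at this
    linarith
  have hTdpos : 0 < Td := lt_trans ht₀ hTd0
  have hTdT : Td ≤ T :=
    Real.rpow_le_rpow (div_nonneg hlM.le hb.le)
      (by gcongr <;> linarith) (by positivity)
  have hfint : IntegrableOn f (Set.Ioi t₀) := f_integrableOn ha hη hz0.le ht₀.le
  have hexpint : IntegrableOn (fun t : ℝ => Real.exp (-(a * t ^ η))) (Set.Ioi 0) :=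
    integrableOn_exp_neg_mul_rpow_aux ha hη
  have hsplit : (∫ t in Set.Ioi t₀, f t)
      = (∫ t in Set.Ioc t₀ Td, f t) + ∫ t in Set.Ioi Td, f t := by
    rw [← setIntegral_union (Set.Ioc_disjoint_Ioi le_rfl) measurableSet_Ioi
      (hfint.mono_set Set.Ioc_subset_Ioi_self) (hfint.mono_set (Set.Ioi_subset_Ioi hTd0.le)),
      Set.Ioc_union_Ioi_eq_Ioi hTd0.le]
  -- piece A
  have hA : (∫ t in Set.Ioc t₀ Td, f t) ≤ Real.exp (-(a * Td ^ η)) := by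
    have hpt : ∀ t ∈ Set.Ioc t₀ Td, f t ≤ Real.exp (-(Real.exp M)) := by
      intro t ht
      have ht0 : 0 ≤ t := le_trans ht₀.le ht.1.le
      have hbt : b * t ^ γ ≤ b * Td ^ γ :=
        mul_le_mul_of_nonneg_left (Real.rpow_le_rpow ht0 ht.2 hγ.le) hb.le
      have hX : Real.exp M ≤ Real.exp (-(b * t ^ γ)) * z := by
        have h1 : Real.exp (-(l - M)) ≤ Real.exp (-(b * t ^ γ)) := by
          rw [Real.exp_le_exp]; rw [hkeyd] at hbt; linarith
        have h2 : Real.exp (-(l - M)) * z = Real.exp M := by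
          rw [show -(l - M) = M + -l by ring, Real.exp_add, hl_def, Real.exp_neg,
            Real.exp_log hz0, mul_assoc, inv_mul_cancel₀ hz0.ne', mul_one]
        calc Real.exp M = Real.exp (-(l - M)) * z := h2.symm
          _ ≤ Real.exp (-(b * t ^ γ)) * z := mul_le_mul_of_nonneg_right h1 hz0.le
      rw [hf_def]
      apply Real.exp_le_exp.mpr
      have hat : 0 ≤ a * t ^ η := by positivity
      linarith
    have hA1 : (∫ t in Set.Ioc t₀ Td, f t) ≤ (Td - t₀) * Real.exp (-(Real.exp M)) := by
      have := setIntegral_mono_on (hfint.mono_set Set.Ioc_subset_Ioi_self)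
        (integrableOn_const measure_Ioc_lt_top.ne) measurableSet_Ioc hpt
      rwa [setIntegral_const, measureReal_def, Real.volume_Ioc, ENNReal.toReal_ofReal (by linarith [hTd0]),
        smul_eq_mul] at this
    have hTpos : 0 < T := lt_of_lt_of_le hTdpos hTdT
    have hA2 : (Td - t₀) * Real.exp (-(Real.exp M)) ≤ T * Real.exp (-(Real.exp M)) :=
      mul_le_mul_of_nonneg_right (by linarith) (Real.exp_pos _).le
    have hA3 : T * Real.exp (-(Real.exp M)) ≤ Real.exp (-(a * T ^ η)) := by
      rw [show T * Real.exp (-(Real.exp M)) = Real.exp (Real.log T - Real.exp M) by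
        rw [Real.exp_sub, Real.exp_log hTpos, Real.exp_neg, ← div_eq_mul_inv]]
      apply Real.exp_le_exp.mpr
      linarith
    have hA4 : Real.exp (-(a * T ^ η)) ≤ Real.exp (-(a * Td ^ η)) := by
      apply Real.exp_le_exp.mpr
      have : Td ^ η ≤ T ^ η := Real.rpow_le_rpow hTdpos.le hTdT hη.le
      nlinarith
    linarith
  -- piece B
  have hB : (∫ t in Set.Ioi Td, f t) ≤ (Td + C) * Real.exp (-(a * Td ^ η)) := by
    have hB0 : (∫ t in Set.Ioi Td, f t) ≤ ∫ t in Set.Ioi Td, Real.exp (-(a * t ^ η)) := by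
      refine setIntegral_mono_on (hfint.mono_set (Set.Ioi_subset_Ioi hTd0.le))
        (hexpint.mono_set (Set.Ioi_subset_Ioi hTdpos.le)) measurableSet_Ioi ?_
      intro t _
      rw [hf_def]
      apply Real.exp_le_exp.mpr
      have : 0 ≤ Real.exp (-(b * t ^ γ)) * z := by positivity
      linarith
    have hBsplit : (∫ t in Set.Ioi Td, Real.exp (-(a * t ^ η)))
        = (∫ t in Set.Ioc Td (2*Td), Real.exp (-(a * t ^ η)))
          + ∫ t in Set.Ioi (2*Td), Real.exp (-(a * t ^ η)) := by
      rw [← setIntegral_union (Set.Ioc_disjoint_Ioi le_rfl) measurableSet_Ioi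
        (hexpint.mono_set (fun t ht => lt_of_lt_of_le hTdpos ht.1.le))
        (hexpint.mono_set (Set.Ioi_subset_Ioi (by linarith))),
        Set.Ioc_union_Ioi_eq_Ioi (by linarith : Td ≤ 2*Td)]
    have hB1 : (∫ t in Set.Ioc Td (2*Td), Real.exp (-(a * t ^ η)))
        ≤ Td * Real.exp (-(a * Td ^ η)) := by
      have hpt : ∀ t ∈ Set.Ioc Td (2*Td),
          Real.exp (-(a * t ^ η)) ≤ Real.exp (-(a * Td ^ η)) := by
        intro t ht
        apply Real.exp_le_exp.mpr
        have : Td ^ η ≤ t ^ η := Real.rpow_le_rpow hTdpos.le ht.1.le hη.le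
        nlinarith
      have := setIntegral_mono_on
        (hexpint.mono_set (fun t ht => lt_of_lt_of_le hTdpos ht.1.le))
        (integrableOn_const measure_Ioc_lt_top.ne) measurableSet_Ioc hpt
      rwa [setIntegral_const, measureReal_def, Real.volume_Ioc, ENNReal.toReal_ofReal (by linarith),
        smul_eq_mul, show 2*Td - Td = Td by ring] at this
    have hB2 : (∫ t in Set.Ioi (2*Td), Real.exp (-(a * t ^ η)))
        ≤ C * Real.exp (-(a * Td ^ η)) := by
      have hpt : ∀ t ∈ Set.Ioi (2*Td), Real.exp (-(a * t ^ η))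
          ≤ Real.exp (-(a * Td ^ η)) * Real.exp (-(c₀ * t ^ η)) := by
        intro t ht
        have ht2 : 2*Td < t := ht
        have ht0 : 0 ≤ t := by linarith
        have hhalf : Td ^ η ≤ t ^ η * 2 ^ (-η) := by
          have h1 : Td ≤ t / 2 := by linarith
          have h2 : Td ^ η ≤ (t / 2) ^ η := Real.rpow_le_rpow hTdpos.le h1 hη.le
          rw [Real.div_rpow ht0 (by norm_num), Real.rpow_neg (by norm_num)] at *
          rw [div_eq_mul_inv] at h2
          exact h2
        rw [← Real.exp_add]
        apply Real.exp_le_exp.mpr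
        have hteta : 0 ≤ t ^ η := Real.rpow_nonneg ht0 _
        rw [hc₀_def]
        nlinarith
      calc (∫ t in Set.Ioi (2*Td), Real.exp (-(a * t ^ η)))
          ≤ ∫ t in Set.Ioi (2*Td), Real.exp (-(a * Td ^ η)) * Real.exp (-(c₀ * t ^ η)) := by
            refine setIntegral_mono_on
              (hexpint.mono_set (Set.Ioi_subset_Ioi (by linarith)))
              ((hCint.mono_set (Set.Ioi_subset_Ioi (by linarith))).const_mul _)
              measurableSet_Ioi hpt
        _ = Real.exp (-(a * Td ^ η)) * ∫ t in Set.Ioi (2*Td), Real.exp (-(c₀ * t ^ η)) := by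
            rw [integral_const_mul]
        _ ≤ Real.exp (-(a * Td ^ η)) * C := by
            refine mul_le_mul_of_nonneg_left ?_ (Real.exp_pos _).le
            refine setIntegral_mono_set hCint ?_ ?_
            · filter_upwards with t using (Real.exp_pos _).le
            · exact (Set.Ioi_subset_Ioi (by linarith)).eventuallyLE
        _ = C * Real.exp (-(a * Td ^ η)) := mul_comm _ _
    linarith
  rw [hsplit]
  have hfinal : (1 + Td + C) * Real.exp (-(a * Td ^ η))
      ≤ (1 + T + C) * Real.exp (-(a * Td ^ η)) :=
    mul_le_mul_of_nonneg_right (by linarith) (Real.exp_pos _).le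
  calc (∫ t in Set.Ioc t₀ Td, f t) + ∫ t in Set.Ioi Td, f t
      ≤ Real.exp (-(a * Td ^ η)) + (Td + C) * Real.exp (-(a * Td ^ η)) := by linarith
    _ = (1 + Td + C) * Real.exp (-(a * Td ^ η)) := by ring
    _ ≤ (1 + T + C) * Real.exp (-(a * Td ^ η)) := hfinal

lemma lim_lower {a η : ℝ} (ha : 0 < a) (hη : 0 < η) :
    Tendsto (fun s : ℝ => (1 + a * (s+1) ^ η) / (a * s ^ η)) atTop (nhds 1) := by
  have h1 : Tendsto (fun s : ℝ => (a * s ^ η)⁻¹) atTop (nhds 0) :=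
    tendsto_inv_atTop_zero.comp ((tendsto_rpow_atTop hη).const_mul_atTop ha)
  have h2 : Tendsto (fun s : ℝ => ((s+1)/s) ^ η) atTop (nhds 1) := by
    have : Tendsto (fun s : ℝ => (s+1)/s) atTop (nhds 1) := by
      have := ((tendsto_const_nhds (x := (1:ℝ))).add tendsto_inv_atTop_zero)
      rw [add_zero] at this
      refine this.congr' ?_
      filter_upwards [eventually_gt_atTop (0:ℝ)] with s hs
      field_simp
    simpa using this.rpow_const (Or.inl one_ne_zero)
  have h3 := h1.add h2
  rw [zero_add] at h3
  refine h3.congr' ?_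
  filter_upwards [eventually_gt_atTop (0:ℝ)] with s hs
  have hs1 : (0:ℝ) < s + 1 := by linarith
  have hne : a * s ^ η ≠ 0 := by positivity
  rw [Real.div_rpow hs1.le hs.le]
  field_simp

lemma lim_logdiv {a η C : ℝ} (ha : 0 < a) (hη : 0 < η) (hC : 0 ≤ C) :
    Tendsto (fun s : ℝ => Real.log (1 + s + C) / (a * s ^ η)) atTop (nhds 0) := by
  have hlim : Tendsto (fun s : ℝ => 2 * Real.log s / (a * s ^ η)) atTop (nhds 0) := by
    have h0 : Tendsto (fun s : ℝ => Real.log s / s ^ η) atTop (nhds 0) :=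
      (isLittleO_log_rpow_atTop hη).tendsto_div_nhds_zero
    have := h0.const_mul (2/a)
    rw [mul_zero] at this
    refine this.congr' ?_
    filter_upwards [eventually_gt_atTop (0:ℝ)] with s hs
    have : s ^ η ≠ 0 := by positivity
    field_simp
  refine tendsto_of_tendsto_of_tendsto_of_le_of_le' tendsto_const_nhds hlim ?_ ?_
  · filter_upwards [eventually_gt_atTop (0:ℝ)] with s hs
    have h1 : (1:ℝ) ≤ 1 + s + C := by linarith
    exact div_nonneg (Real.log_nonneg h1) (by positivity)
  · filter_upwards [eventually_ge_atTop (max 2 (1 + C))] with s hs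
    have hs2 : (2:ℝ) ≤ s := le_trans (le_max_left _ _) hs
    have hsC : 1 + C ≤ s := le_trans (le_max_right _ _) hs
    have harg : 1 + s + C ≤ s ^ (2:ℕ) := by nlinarith
    have h1 : Real.log (1 + s + C) ≤ Real.log (s ^ (2:ℕ)) :=
      Real.log_le_log (by linarith) harg
    rw [Real.log_pow] at h1
    have h2 : Real.log (1 + s + C) ≤ 2 * Real.log s := by push_cast at h1; linarith
    have hden : (0:ℝ) < a * s ^ η := by positivity
    exact div_le_div_of_nonneg_right h2 hden.le

lemma lim_oneminus {K p : ℝ} (hp : 0 ≤ p) :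
    Tendsto (fun l : ℝ => (1 - K * Real.log l / l) ^ p) atTop (nhds 1) := by
  have h0 : Tendsto (fun l : ℝ => Real.log l / l) atTop (nhds 0) := by
    have := (isLittleO_log_rpow_atTop one_pos).tendsto_div_nhds_zero
    refine this.congr' ?_
    filter_upwards [eventually_gt_atTop (0:ℝ)] with l hl
    rw [Real.rpow_one]
  have h1 : Tendsto (fun l : ℝ => 1 - K * Real.log l / l) atTop (nhds 1) := by
    have := (h0.const_mul K)
    rw [mul_zero] at this
    have h2 := (tendsto_const_nhds (x := (1:ℝ))).sub this
    rw [sub_zero] at h2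
    refine h2.congr ?_
    intro l; ring_nf
  simpa using h1.rpow_const (Or.inl one_ne_zero)

/-- Lemma 5.1: for constants `a, b, γ, η > 0` and `t₀ > 0`,
`∫_{t₀}^∞ exp(−e^{−b t^γ} z − a t^η) dt ≈_log exp(−a b^{−η/γ} (log z)^{η/γ})`
as `z → ∞`. -/
theorem integral_log_asymp_doubly_exponential
    (a b γ η t₀ : ℝ) (ha : 0 < a) (hb : 0 < b) (hγ : 0 < γ) (hη : 0 < η)
    (ht₀ : 0 < t₀) :
    Tendsto (fun z =>
        Real.log (∫ t in Set.Ioi t₀,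
            Real.exp (-(Real.exp (-(b * t ^ γ)) * z) - a * t ^ η)) /
          (-(a * b ^ (-(η / γ)) * Real.log z ^ (η / γ))))
      atTop (nhds 1) := by
  set p := η / γ with hp_def
  have hp : 0 < p := div_pos hη hγ
  set K := p + 1 with hK_def
  have hK : 0 < K := by positivity
  set C := ∫ t in Set.Ioi (0:ℝ), Real.exp (-(a * (1 - 2^(-η)) * t ^ η)) with hC_def
  have hC0 : 0 ≤ C := setIntegral_nonneg measurableSet_Ioi (fun t _ => (Real.exp_pos _).le)
  clear_value p K C
  -- key rpow identity
  have idT : ∀ l : ℝ, 0 ≤ l → a * ((l / b) ^ (1/γ)) ^ η = a * b ^ (-p) * l ^ p := by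
    intro l hl
    rw [← Real.rpow_mul (div_nonneg hl hb.le),
      show 1/γ * η = p by rw [hp_def]; ring,
      Real.div_rpow hl hb.le, Real.rpow_neg hb.le]
    ring
  -- T tends to infinity
  have hTtop : Tendsto (fun l : ℝ => (l / b) ^ (1/γ)) atTop atTop :=
    (tendsto_rpow_atTop (by positivity)).comp (tendsto_id.atTop_div_const hb)
  -- limit of lower ratio
  have h₁ : Tendsto (fun l : ℝ =>
      (-1 - a * ((l / b) ^ (1/γ) + 1) ^ η) / (-(a * b ^ (-p) * l ^ p)))
      atTop (nhds 1) := by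
    refine ((lim_lower ha hη).comp hTtop).congr' ?_
    filter_upwards [eventually_ge_atTop (0:ℝ)] with l hl
    simp only [Function.comp_apply]
    rw [← idT l hl, show (-1 - a * ((l / b) ^ (1/γ) + 1) ^ η)
        = -(1 + a * ((l / b) ^ (1/γ) + 1) ^ η) by ring, neg_div_neg_eq]
  -- eventual half bound
  have hhalf : ∀ᶠ l : ℝ in atTop, K * Real.log l ≤ l / 2 := by
    have h0 : Tendsto (fun l : ℝ => K * Real.log l / l) atTop (nhds 0) := by
      have := ((isLittleO_log_rpow_atTop one_pos).tendsto_div_nhds_zero).const_mul K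
      rw [mul_zero] at this
      refine this.congr' ?_
      filter_upwards [eventually_gt_atTop (0:ℝ)] with l hl
      rw [Real.rpow_one]
      ring
    filter_upwards [h0.eventually_lt_const (show (0:ℝ) < 1/2 by norm_num),
      eventually_gt_atTop (0:ℝ)] with l h1 h2
    have := (div_lt_iff₀ h2).mp h1
    linarith
  -- limit of upper ratio
  have h₂ : Tendsto (fun l : ℝ =>
      (Real.log (1 + (l / b) ^ (1/γ) + C) - a * (((l - K * Real.log l) / b) ^ (1/γ)) ^ η)
        / (-(a * b ^ (-p) * l ^ p))) atTop (nhds 1) := by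
    have main := (lim_oneminus (K := K) (p := p) hp.le).sub
      ((lim_logdiv (a := a) (η := η) (C := C) ha hη hC0).comp hTtop)
    rw [sub_zero] at main
    refine main.congr' ?_
    filter_upwards [hhalf, eventually_gt_atTop (0:ℝ)] with l hh hl
    have hlM : 0 ≤ l - K * Real.log l := by linarith
    simp only [Function.comp_apply]
    rw [show (Real.log (1 + (l / b) ^ (1/γ) + C)
          - a * (((l - K * Real.log l) / b) ^ (1/γ)) ^ η)
        = -(a * (((l - K * Real.log l) / b) ^ (1/γ)) ^ η
          - Real.log (1 + (l / b) ^ (1/γ) + C)) by ring,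
      neg_div_neg_eq, sub_div]
    congr 1
    · rw [idT _ hlM, mul_div_mul_left _ _ (by positivity : a * b ^ (-p) ≠ 0),
        ← Real.div_rpow hlM hl.le, sub_div, div_self hl.ne']
    · rw [idT l hl.le]
  -- eventual exp comparison
  have hq5 : ∀ᶠ l : ℝ in atTop,
      a * ((l / b) ^ (1/γ)) ^ η + Real.log ((l / b) ^ (1/γ)) ≤ Real.exp (K * Real.log l) := by
    have t1 : Tendsto (fun l : ℝ => a * b ^ (-p) * l ^ p / l ^ K) atTop (nhds 0) := by
      have := (tendsto_rpow_neg_atTop one_pos).const_mul (a * b ^ (-p))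
      rw [mul_zero] at this
      refine this.congr' ?_
      filter_upwards [eventually_gt_atTop (0:ℝ)] with l hl
      rw [mul_div_assoc, ← Real.rpow_sub hl, show p - K = -1 by rw [hK_def]; ring1]
    have t2 : Tendsto (fun l : ℝ => (1/γ) * (Real.log l - Real.log b) / l ^ K)
        atTop (nhds 0) := by
      have u1 := ((isLittleO_log_rpow_atTop hK).tendsto_div_nhds_zero).const_mul (1/γ)
      have u2 := (tendsto_rpow_neg_atTop hK).const_mul ((1/γ) * Real.log b)
      rw [mul_zero] at u1 u2
      have := u1.sub u2
      rw [sub_zero] at this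
      refine this.congr' ?_
      filter_upwards [eventually_gt_atTop (0:ℝ)] with l hl
      have hlK : l ^ K ≠ 0 := (Real.rpow_pos_of_pos hl K).ne'
      rw [Real.rpow_neg hl.le]
      field_simp
    have t3 := t1.add t2
    rw [add_zero] at t3
    filter_upwards [t3.eventually_lt_const one_pos, eventually_gt_atTop (1:ℝ)] with l h1 hl1
    have hl0 : (0:ℝ) < l := lt_trans one_pos hl1
    have hlK : (0:ℝ) < l ^ K := Real.rpow_pos_of_pos hl0 K
    have hsum : a * b ^ (-p) * l ^ p + (1/γ) * (Real.log l - Real.log b) ≤ l ^ K := by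
      rw [← add_div] at h1
      have := (div_lt_one hlK).mp h1
      linarith
    rw [idT l hl0.le, Real.log_rpow (div_pos hl0 hb), Real.log_div hl0.ne' hb.ne',
      show Real.exp (K * Real.log l) = l ^ K from by rw [Real.rpow_def_of_pos hl0, mul_comm]]
    linarith
  -- gather eventual conditions in l
  have hql : ∀ᶠ l : ℝ in atTop,
      (0 < l ∧ t₀ ≤ (l / b) ^ (1/γ) ∧ 0 ≤ K * Real.log l ∧
        b * t₀ ^ γ < l - K * Real.log l) ∧
      a * ((l / b) ^ (1/γ)) ^ η + Real.log ((l / b) ^ (1/γ)) ≤ Real.exp (K * Real.log l) := by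
    filter_upwards [eventually_gt_atTop (0:ℝ), hTtop.eventually (eventually_ge_atTop t₀),
      eventually_ge_atTop (1:ℝ), hhalf, eventually_gt_atTop (2 * (b * t₀ ^ γ)), hq5]
      with l c1 c2 c3 ch c4 c5
    exact ⟨⟨c1, c2, mul_nonneg hK.le (Real.log_nonneg c3), by linarith⟩, c5⟩
  have hqz := Real.tendsto_log_atTop.eventually hql
  have hboth : ∀ᶠ z in atTop,
      ((fun l : ℝ => (Real.log (1 + (l / b) ^ (1/γ) + C)
          - a * (((l - K * Real.log l) / b) ^ (1/γ)) ^ η) / (-(a * b ^ (-p) * l ^ p)))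
        ∘ Real.log) z
        ≤ Real.log (∫ t in Set.Ioi t₀,
            Real.exp (-(Real.exp (-(b * t ^ γ)) * z) - a * t ^ η)) /
          (-(a * b ^ (-p) * Real.log z ^ p)) ∧
      Real.log (∫ t in Set.Ioi t₀,
            Real.exp (-(Real.exp (-(b * t ^ γ)) * z) - a * t ^ η)) /
          (-(a * b ^ (-p) * Real.log z ^ p))
        ≤ ((fun l : ℝ => (-1 - a * ((l / b) ^ (1/γ) + 1) ^ η) / (-(a * b ^ (-p) * l ^ p)))
        ∘ Real.log) z := by
    filter_upwards [hqz, eventually_ge_atTop (1:ℝ)] with z hQ hz1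
    obtain ⟨⟨c1, c2, c3, c4⟩, c5⟩ := hQ
    have hlow := lower_bound ha hb hγ hη ht₀ hz1 c2
    have hIpos : 0 < ∫ t in Set.Ioi t₀,
        Real.exp (-(Real.exp (-(b * t ^ γ)) * z) - a * t ^ η) :=
      lt_of_lt_of_le (Real.exp_pos _) hlow
    have hup := upper_bound (M := K * Real.log (Real.log z)) ha hb hγ hη ht₀ hz1 c3 c4 c5
    rw [← hC_def] at hup
    have hTpos : 0 < (Real.log z / b) ^ (1/γ) := lt_of_lt_of_le ht₀ c2
    have hloglow : -1 - a * ((Real.log z / b) ^ (1/γ) + 1) ^ η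
        ≤ Real.log (∫ t in Set.Ioi t₀,
            Real.exp (-(Real.exp (-(b * t ^ γ)) * z) - a * t ^ η)) :=
      (Real.le_log_iff_exp_le hIpos).mpr hlow
    have pos1TC : (0:ℝ) < 1 + (Real.log z / b) ^ (1/γ) + C := by linarith
    have hlogup : Real.log (∫ t in Set.Ioi t₀,
          Real.exp (-(Real.exp (-(b * t ^ γ)) * z) - a * t ^ η))
        ≤ Real.log (1 + (Real.log z / b) ^ (1/γ) + C)
          - a * (((Real.log z - K * Real.log (Real.log z)) / b) ^ (1/γ)) ^ η := by
      have h1 := Real.log_le_log hIpos hup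
      rw [Real.log_mul pos1TC.ne' (Real.exp_ne_zero _), Real.log_exp] at h1
      linarith
    have hDneg : -(a * b ^ (-p) * Real.log z ^ p) ≤ 0 := by
      have h0 : 0 < a * b ^ (-p) * Real.log z ^ p := by
        have := c1
        positivity
      linarith
    constructor
    · exact div_le_div_of_nonpos_of_le hDneg hlogup
    · exact div_le_div_of_nonpos_of_le hDneg hloglow
  exact tendsto_of_tendsto_of_tendsto_of_le_of_le'
    (h₂.comp Real.tendsto_log_atTop) (h₁.comp Real.tendsto_log_atTop)
    (hboth.mono fun z h => h.1) (hboth.mono fun z h => h.2)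
end

section
/- For fixed constants η > 0, a > 0, b > 0 and t_0 > 0, the integral I(z) = ∫_{t_0}^∞ exp(−t^{−b} z − a t^η) dt satisfies I(z) ≈_log exp(−c_{12} z^{θ_{12}}) as z → ∞, where θ_{12} = η/(b+η) and c_{12} = a^{1−θ_{12}} [(η/b)^{1−θ_{12}} + (b/η)^{θ_{12}}]; i.e. log I(z) / (−c_{12} z^{θ_{12}}) → 1 as z → ∞. -/
open MeasureTheory ProbabilityTheory Filter Real Set

lemma aux_K_eq {b η : ℝ} (hb : 0 < b) (hη : 0 < η) :
    (η / b) ^ (1 - η / (b + η)) + (b / η) ^ (η / (b + η))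
      = ((b + η) / b) * (b / η) ^ (η / (b + η)) := by
  have hηb : (0:ℝ) < η / b := div_pos hη hb
  have h2 : (b / η : ℝ) ^ (η/(b+η)) = (η / b) ^ (-(η/(b+η))) := by
    rw [Real.rpow_neg hηb.le, ← Real.inv_rpow hηb.le, inv_div]
  rw [h2, show (1 - η/(b+η)) = 1 + (-(η/(b+η))) by ring, Real.rpow_add hηb, Real.rpow_one]
  have hb' : b ≠ 0 := hb.ne'
  field_simp
  ring

lemma aux_C_eq {b η : ℝ} (hb : 0 < b) (hη : 0 < η) :
    ((b+η)/η) ^ (η/(b+η)) * ((b+η)/b) ^ (1 - η/(b+η))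
      = ((b + η) / b) * (b / η) ^ (η / (b + η)) := by
  have hw : (0:ℝ) < b + η := by linarith
  have h1 : (0:ℝ) < (b+η)/η := div_pos hw hη
  have h2 : (0:ℝ) < (b+η)/b := div_pos hw hb
  rw [show (1 - η/(b+η)) = 1 + (-(η/(b+η))) by ring, Real.rpow_add h2, Real.rpow_one,
    Real.rpow_neg h2.le, mul_comm (((b+η)/η) ^ (η/(b+η))), mul_assoc, inv_mul_eq_div,
    ← Real.div_rpow h1.le h2.le,
    show ((b+η)/η) / ((b+η)/b) = b/η by field_simp]

lemma aux_amgm {a b η : ℝ} (ha : 0 < a) (hb : 0 < b) (hη : 0 < η) {z t : ℝ}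
    (hz : 0 ≤ z) (ht : 0 < t) :
    a ^ (1 - η/(b+η)) * (((b+η)/b) * (b/η) ^ (η/(b+η))) * z ^ (η/(b+η))
      ≤ t ^ (-b) * z + a * t ^ η := by
  have hw : (0:ℝ) < b + η := by linarith
  set θ := η/(b+η) with hθdef
  have hθ0 : 0 < θ := div_pos hη hw
  have hθ1 : θ < 1 := by rw [hθdef, div_lt_one hw]; linarith
  have h1θ : 0 < 1 - θ := by linarith
  have htb : (0:ℝ) ≤ t ^ (-b) := (Real.rpow_pos_of_pos ht _).le
  have htη : (0:ℝ) ≤ t ^ η := (Real.rpow_pos_of_pos ht _).le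
  have key := Real.geom_mean_le_arith_mean2_weighted hθ0.le h1θ.le
    (div_nonneg (mul_nonneg htb hz) hθ0.le)
    (div_nonneg (mul_nonneg ha.le htη) h1θ.le) (by ring)
  have harith : θ * (t ^ (-b) * z / θ) + (1-θ) * (a * t ^ η / (1-θ))
      = t ^ (-b) * z + a * t ^ η := by field_simp
  rw [harith] at key
  refine le_trans (le_of_eq ?_) key
  rw [div_eq_mul_inv (t ^ (-b) * z), div_eq_mul_inv (a * t ^ η),
    Real.mul_rpow (mul_nonneg htb hz) (inv_nonneg.2 hθ0.le),
    Real.mul_rpow (mul_nonneg ha.le htη) (inv_nonneg.2 h1θ.le),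
    Real.mul_rpow htb hz, Real.mul_rpow ha.le htη,
    Real.inv_rpow hθ0.le, Real.inv_rpow h1θ.le,
    ← Real.rpow_mul ht.le, ← Real.rpow_mul ht.le]
  have hθη : ((θ : ℝ) ^ θ)⁻¹ = ((b+η)/η) ^ θ := by
    rw [← Real.inv_rpow hθ0.le, hθdef, inv_div]
  have h1θb : 1 - θ = b/(b+η) := by rw [hθdef]; field_simp; ring
  have h1θη : (((1 - θ : ℝ)) ^ (1-θ))⁻¹ = ((b+η)/b) ^ (1-θ) := by
    rw [← Real.inv_rpow h1θ.le, h1θb, inv_div]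
  rw [hθη, h1θη]
  have ht0 : t ^ (-b * θ) * t ^ (η * (1-θ)) = 1 := by
    rw [← Real.rpow_add ht, show -b*θ + η*(1-θ) = 0 by rw [hθdef]; field_simp; ring,
      Real.rpow_zero]
  rw [← aux_C_eq hb hη]
  linear_combination (-(a ^ (1-θ)) * ((b+η)/η)^θ * ((b+η)/b)^(1-θ) * z^θ) * ht0

lemma aux_tstar {a b η : ℝ} (ha : 0 < a) (hb : 0 < b) (hη : 0 < η) {z : ℝ} (hz : 0 < z) :
    ((b*z/(a*η)) ^ ((1:ℝ)/(b+η))) ^ (-b) * z + a * ((b*z/(a*η)) ^ ((1:ℝ)/(b+η))) ^ η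
      = a ^ (1 - η/(b+η)) * (((b+η)/b) * (b/η) ^ (η/(b+η))) * z ^ (η/(b+η)) := by
  have hw : (0:ℝ) < b + η := by linarith
  set θ := η/(b+η) with hθdef
  set s := b*z/(a*η) with hsdef
  have hs : 0 < s := by positivity
  have h1 : (s ^ ((1:ℝ)/(b+η))) ^ (-b) = s ^ (θ - 1) := by
    rw [← Real.rpow_mul hs.le, show (1:ℝ)/(b+η) * (-b) = θ - 1 by
      rw [hθdef]; field_simp; ring]
  have h2 : (s ^ ((1:ℝ)/(b+η))) ^ η = s ^ θ := by
    rw [← Real.rpow_mul hs.le, show (1:ℝ)/(b+η) * η = θ by rw [hθdef]; ring]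
  rw [h1, h2, show θ - 1 = θ + (-1) by ring, Real.rpow_add hs, Real.rpow_neg_one]
  have hstep : s ^ θ * s⁻¹ * z + a * s ^ θ = s ^ θ * (a * (b+η) / b) := by
    rw [hsdef]; field_simp; ring
  rw [hstep]
  have hsθ : s ^ θ = (b/η) ^ θ * a ^ (-θ) * z ^ θ := by
    rw [hsdef, show b*z/(a*η) = (b/η) * a⁻¹ * z by field_simp,
      Real.mul_rpow (by positivity) hz.le, Real.mul_rpow (by positivity) (by positivity),
      Real.inv_rpow ha.le, ← Real.rpow_neg ha.le]
  rw [hsθ, show (1 - θ) = 1 + (-θ) by ring, Real.rpow_add ha, Real.rpow_one]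
  ring

lemma aux_int_exp' {k η : ℝ} (t₀ : ℝ) (hk : 0 < k) (hη : 0 < η) :
    IntegrableOn (fun t : ℝ => Real.exp (-(k * t ^ η))) (Ioi t₀) := by
  have hcont : Continuous (fun t : ℝ => Real.exp (-(k * t ^ η))) := by
    refine Real.continuous_exp.comp (Continuous.neg (Continuous.mul continuous_const ?_))
    exact continuous_iff_continuousAt.2 fun x =>
      Real.continuousAt_rpow_const x η (Or.inr hη.le)
  have hg : IntegrableOn (fun x : ℝ => x ^ (-2 : ℝ)) (Ioi 1) :=
    integrableOn_Ioi_rpow_of_lt (by norm_num) one_pos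
  have hten : Tendsto (fun x : ℝ => Real.exp (-(k * x ^ η)) / x ^ (-2:ℝ)) atTop (nhds 0) := by
    have h1 : Tendsto (fun u : ℝ => u ^ (2/η) * Real.exp (-k * u)) atTop (nhds 0) :=
      tendsto_rpow_mul_exp_neg_mul_atTop_nhds_zero (2/η) k hk
    have h2 : Tendsto (fun x : ℝ => x ^ η) atTop atTop := tendsto_rpow_atTop hη
    have h3 := h1.comp h2
    refine h3.congr' ?_
    filter_upwards [eventually_gt_atTop 0] with x hx
    have : ((x:ℝ) ^ η) ^ (2/η) = x ^ (2:ℝ) := by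
      rw [← Real.rpow_mul hx.le, show η * (2/η) = 2 by field_simp]
    simp only [Function.comp_apply, this]
    rw [Real.rpow_neg hx.le, div_inv_eq_mul, neg_mul]
    ring
  have ho : (fun t : ℝ => Real.exp (-(k * t ^ η))) =O[atTop] fun x : ℝ => x ^ (-2:ℝ) := by
    refine Asymptotics.IsLittleO.isBigO (Asymptotics.isLittleO_iff_tendsto' ?_ |>.2 hten)
    filter_upwards [eventually_gt_atTop 0] with x hx h
    exact absurd h (Real.rpow_pos_of_pos hx _).ne'
  exact (integrableOn_Ici_iff_integrableOn_Ioi (by finiteness)).mp <|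
    (hcont.continuousOn.locallyIntegrableOn measurableSet_Ici).integrableOn_of_isBigO_atTop
      ho ⟨Ioi 1, Ioi_mem_atTop 1, hg⟩

lemma aux_cont_main {b η : ℝ} (a t₀ : ℝ) (ht₀ : 0 < t₀) (z : ℝ) :
    ContinuousOn (fun t : ℝ => Real.exp (-(t ^ (-b) * z) - a * t ^ η)) (Ioi t₀) := by
  intro x hx
  have hx0 : x ≠ 0 := by have := ht₀.trans hx; positivity
  refine ContinuousAt.continuousWithinAt ?_
  have h1 : ContinuousAt (fun t : ℝ => t ^ (-b)) x :=
    Real.continuousAt_rpow_const x (-b) (Or.inl hx0)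
  have h2 : ContinuousAt (fun t : ℝ => t ^ η) x :=
    Real.continuousAt_rpow_const x η (Or.inl hx0)
  exact (((h1.mul continuousAt_const).neg.sub (continuousAt_const.mul h2)).rexp)

lemma aux_int_main {a b η t₀ : ℝ} (ha : 0 < a) (hb : 0 < b) (hη : 0 < η) (ht₀ : 0 < t₀)
    {z : ℝ} (hz : 0 ≤ z) :
    IntegrableOn (fun t : ℝ => Real.exp (-(t ^ (-b) * z) - a * t ^ η)) (Ioi t₀) := by
  refine (aux_int_exp' t₀ ha hη).mono' ?_ ?_
  · exact (aux_cont_main a t₀ ht₀ z).aestronglyMeasurable measurableSet_Ioi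
  · filter_upwards [self_mem_ae_restrict (measurableSet_Ioi : MeasurableSet (Ioi t₀))]
      with t ht
    have ht0 : 0 < t := ht₀.trans ht
    rw [Real.norm_eq_abs, abs_of_pos (Real.exp_pos _)]
    apply Real.exp_le_exp.2
    have : 0 ≤ t ^ (-b) * z := mul_nonneg (Real.rpow_pos_of_pos ht0 _).le hz
    linarith

lemma aux_lower {a b η t₀ : ℝ} (ha : 0 < a) (hb : 0 < b) (hη : 0 < η) (ht₀ : 0 < t₀)
    {z u v : ℝ} (hz : 0 ≤ z) (hu : t₀ ≤ u) (huv : u < v) :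
    (v - u) * Real.exp (-(u ^ (-b) * z) - a * v ^ η)
      ≤ ∫ t in Ioi t₀, Real.exp (-(t ^ (-b) * z) - a * t ^ η) := by
  have hu0 : 0 < u := ht₀.trans_le hu
  have hIoc : Ioc u v ⊆ Ioi t₀ := fun t htv => lt_of_le_of_lt hu htv.1
  have hint := aux_int_main ha hb hη ht₀ hz (t₀ := t₀)
  have step1 : ∫ t in Ioc u v, Real.exp (-(t ^ (-b) * z) - a * t ^ η)
      ≤ ∫ t in Ioi t₀, Real.exp (-(t ^ (-b) * z) - a * t ^ η) := by
    refine setIntegral_mono_set hint ?_ (HasSubset.Subset.eventuallyLE hIoc)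
    filter_upwards with t using (Real.exp_pos _).le
  refine le_trans ?_ step1
  have step2 : ∫ t in Ioc u v, Real.exp (-(u ^ (-b) * z) - a * v ^ η)
      ≤ ∫ t in Ioc u v, Real.exp (-(t ^ (-b) * z) - a * t ^ η) := by
    refine setIntegral_mono_on (integrableOn_const measure_Ioc_lt_top.ne)
      (hint.mono_set hIoc) measurableSet_Ioc ?_
    intro t htv
    have ht0 : 0 < t := hu0.trans htv.1
    apply Real.exp_le_exp.2
    have h1 : t ^ (-b) ≤ u ^ (-b) :=
      Real.rpow_le_rpow_of_nonpos hu0 htv.1.le (by linarith)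
    have h2 : t ^ η ≤ v ^ η := Real.rpow_le_rpow ht0.le htv.2 hη.le
    have := mul_le_mul_of_nonneg_right h1 hz
    nlinarith
  refine le_trans (le_of_eq ?_) step2
  rw [setIntegral_const, measureReal_def, Real.volume_Ioc, smul_eq_mul, ENNReal.toReal_ofReal (by linarith)]

lemma aux_pos {a b η t₀ : ℝ} (ha : 0 < a) (hb : 0 < b) (hη : 0 < η) (ht₀ : 0 < t₀)
    {z : ℝ} (hz : 0 ≤ z) :
    0 < ∫ t in Ioi t₀, Real.exp (-(t ^ (-b) * z) - a * t ^ η) := by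
  refine lt_of_lt_of_le ?_ (aux_lower ha hb hη ht₀ hz le_rfl (lt_add_one t₀))
  have := Real.exp_pos (-(t₀ ^ (-b) * z) - a * (t₀+1) ^ η)
  nlinarith

lemma aux_upper {a b η t₀ : ℝ} (ha : 0 < a) (hb : 0 < b) (hη : 0 < η) (ht₀ : 0 < t₀)
    {ε z : ℝ} (hε0 : 0 < ε) (hε1 : ε < 1) (hz : 0 ≤ z) :
    ∫ t in Ioi t₀, Real.exp (-(t ^ (-b) * z) - a * t ^ η)
      ≤ Real.exp (-(((1-ε)*a) ^ (1 - η/(b+η)) * (((b+η)/b) * (b/η) ^ (η/(b+η)))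
          * z ^ (η/(b+η))))
        * ∫ t in Ioi t₀, Real.exp (-(ε * a * t ^ η)) := by
  have ha' : 0 < (1-ε)*a := by nlinarith
  have hεa : 0 < ε*a := by positivity
  have hint1 := aux_int_main ha hb hη ht₀ hz (t₀ := t₀)
  have hint2 := aux_int_exp' t₀ hεa hη
  calc ∫ t in Ioi t₀, Real.exp (-(t ^ (-b) * z) - a * t ^ η)
      ≤ ∫ t in Ioi t₀, Real.exp (-(((1-ε)*a) ^ (1 - η/(b+η))
            * (((b+η)/b) * (b/η) ^ (η/(b+η))) * z ^ (η/(b+η))))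
          * Real.exp (-(ε * a * t ^ η)) := by
        refine setIntegral_mono_on hint1 (hint2.const_mul _) measurableSet_Ioi ?_
        intro t ht
        have ht0 : 0 < t := ht₀.trans ht
        rw [show -(t ^ (-b) * z) - a * t ^ η
            = (-(t ^ (-b) * z + (1-ε)*a * t ^ η)) + (-(ε * a * t ^ η)) by ring,
          Real.exp_add]
        refine mul_le_mul_of_nonneg_right ?_ (Real.exp_pos _).le
        refine Real.exp_le_exp.2 (neg_le_neg ?_)
        have := aux_amgm ha' hb hη hz ht0
        linarith [this]
    _ = Real.exp (-(((1-ε)*a) ^ (1 - η/(b+η)) * (((b+η)/b) * (b/η) ^ (η/(b+η)))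
          * z ^ (η/(b+η)))) * ∫ t in Ioi t₀, Real.exp (-(ε * a * t ^ η)) :=
        integral_const_mul _ _


/-- Lemma 5.4: for constants `η, a, b > 0` and `t₀ > 0`,
`∫_{t₀}^∞ exp(−t^{−b} z − a t^η) dt ≈_log exp(−c₁₂ z^{θ₁₂})` as `z → ∞`, where
`θ₁₂ = η/(b+η)` and `c₁₂ = a^{1−θ₁₂} [(η/b)^{1−θ₁₂} + (b/η)^{θ₁₂}]`. -/
theorem integral_log_asymp_power
    (a b η t₀ : ℝ) (ha : 0 < a) (hb : 0 < b) (hη : 0 < η) (ht₀ : 0 < t₀) :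
    Tendsto (fun z =>
        Real.log (∫ t in Set.Ioi t₀, Real.exp (-(t ^ (-b) * z) - a * t ^ η)) /
          (-(a ^ (1 - η / (b + η))
              * ((η / b) ^ (1 - η / (b + η)) + (b / η) ^ (η / (b + η)))
            * z ^ (η / (b + η)))))
      atTop (nhds 1) := by
  have hw : (0:ℝ) < b + η := by linarith
  have hθ0 : 0 < η/(b+η) := div_pos hη hw
  have hθ1 : η/(b+η) < 1 := by rw [div_lt_one hw]; linarith
  have hC : 0 < ((b+η)/b) * (b/η) ^ (η/(b+η)) := by positivity
  have hc : 0 < a ^ (1 - η/(b+η)) * (((b+η)/b) * (b/η) ^ (η/(b+η))) := by positivity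
  simp only [aux_K_eq hb hη]
  rw [tendsto_order]
  constructor
  · -- lower bound on ratio, from upper bound on integral
    intro x hx
    set ε := min ((1-x)/2) (1/2) with hεdef
    have hε0 : 0 < ε := lt_min (by linarith) (by norm_num)
    have hε1 : ε < 1 := lt_of_le_of_lt (min_le_right _ _) (by norm_num)
    have hεx : x < 1 - ε := by
      rcases le_total ((1-x)/2) (1/2) with h | h
      · rw [hεdef, min_eq_left h]; linarith
      · have h' : x ≤ 0 := by linarith
        rw [hεdef, min_eq_right h]; linarith
    have hεa : 0 < ε * a := by positivity
    have hCε : 0 < ∫ t in Ioi t₀, Real.exp (-(ε * a * t ^ η)) := by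
      have h0 := aux_pos (a := ε*a) hεa hb hη ht₀ (z := 0) le_rfl
      have heq : (fun t : ℝ => Real.exp (-(t ^ (-b) * 0) - ε * a * t ^ η))
          = fun t : ℝ => Real.exp (-(ε * a * t ^ η)) := by
        funext t; rw [mul_zero, neg_zero, zero_sub]
      rwa [heq] at h0
    -- cε ≥ (1-ε) * c
    have hcε : (1-ε) * (a ^ (1 - η/(b+η)) * (((b+η)/b) * (b/η) ^ (η/(b+η))))
        ≤ ((1-ε)*a) ^ (1 - η/(b+η)) * (((b+η)/b) * (b/η) ^ (η/(b+η))) := by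
      rw [Real.mul_rpow (by linarith) ha.le]
      have h1 : (1-ε) ^ (1:ℝ) ≤ (1-ε) ^ (1 - η/(b+η)) :=
        Real.rpow_le_rpow_of_exponent_ge (by linarith) (by linarith) (by linarith)
      rw [Real.rpow_one] at h1
      have : 0 ≤ a ^ (1 - η/(b+η)) * (((b+η)/b) * (b/η) ^ (η/(b+η))) := hc.le
      nlinarith [Real.rpow_pos_of_pos ha (1 - η/(b+η)), hC]
    set k := ((1-ε)*a) ^ (1 - η/(b+η)) * (((b+η)/b) * (b/η) ^ (η/(b+η)))
        - x * (a ^ (1 - η/(b+η)) * (((b+η)/b) * (b/η) ^ (η/(b+η)))) with hkdef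
    have hk : 0 < k := by
      have : x * (a ^ (1 - η/(b+η)) * (((b+η)/b) * (b/η) ^ (η/(b+η))))
          < (1-ε) * (a ^ (1 - η/(b+η)) * (((b+η)/b) * (b/η) ^ (η/(b+η)))) :=
        (mul_lt_mul_iff_of_pos_right hc).2 hεx
      rw [hkdef]; linarith
    filter_upwards [eventually_gt_atTop 0,
      (tendsto_rpow_atTop hθ0).eventually_gt_atTop
        (Real.log (∫ t in Ioi t₀, Real.exp (-(ε * a * t ^ η))) / k)] with z hz0 hzk
    have hden : -(a ^ (1 - η/(b+η)) * (((b+η)/b) * (b/η) ^ (η/(b+η))) * z ^ (η/(b+η))) < 0 :=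
      neg_lt_zero.2 (mul_pos hc (Real.rpow_pos_of_pos hz0 (η/(b+η))))
    rw [lt_div_iff_of_neg hden]
    have hup := aux_upper ha hb hη ht₀ hε0 hε1 hz0.le
    have hIpos := aux_pos ha hb hη ht₀ hz0.le (t₀ := t₀)
    have hlog := Real.log_le_log hIpos hup
    rw [Real.log_mul (Real.exp_pos _).ne' hCε.ne', Real.log_exp] at hlog
    have hzk' : Real.log (∫ t in Ioi t₀, Real.exp (-(ε * a * t ^ η))) < k * z ^ (η/(b+η)) := by
      rw [mul_comm k]; exact (div_lt_iff₀ hk).1 hzk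
    have hring : k * z ^ (η/(b+η))
        = ((1-ε)*a) ^ (1 - η/(b+η)) * (((b+η)/b) * (b/η) ^ (η/(b+η))) * z ^ (η/(b+η))
          - x * (a ^ (1 - η/(b+η)) * (((b+η)/b) * (b/η) ^ (η/(b+η))) * z ^ (η/(b+η))) := by
      rw [hkdef]; ring
    rw [hring] at hzk'
    linarith
  · -- upper bound on ratio, from lower bound on integral
    intro x hx
    have hx0 : (0:ℝ) < x := by linarith
    have h1x : 1 < x ^ ((1:ℝ)/η) :=
      (Real.one_lt_rpow_iff_of_pos hx0).2 (Or.inl ⟨hx, by positivity⟩)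
    set δ := x ^ ((1:ℝ)/η) - 1 with hδdef
    have hδ0 : 0 < δ := by rw [hδdef]; linarith
    have hδx : (1+δ) ^ η = x := by
      rw [hδdef, show 1 + (x ^ ((1:ℝ)/η) - 1) = x ^ ((1:ℝ)/η) by ring,
        ← Real.rpow_mul hx0.le, one_div_mul_cancel hη.ne', Real.rpow_one]
    have htst : Tendsto (fun z : ℝ => (b*z/(a*η)) ^ ((1:ℝ)/(b+η))) atTop atTop := by
      have hlin : Tendsto (fun z : ℝ => b*z/(a*η)) atTop atTop := by
        have heq : (fun z : ℝ => b*z/(a*η)) = fun z => (b/(a*η)) * z := by funext z; ring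
        rw [heq]
        exact Tendsto.const_mul_atTop (by positivity) tendsto_id
      exact (tendsto_rpow_atTop (by positivity)).comp hlin
    filter_upwards [eventually_gt_atTop 0, htst.eventually_gt_atTop t₀,
      (htst.const_mul_atTop hδ0).eventually_gt_atTop 1] with z hz0 hzt hzδ
    set T := (b*z/(a*η)) ^ ((1:ℝ)/(b+η)) with hT
    have hT0 : 0 < T := ht₀.trans hzt
    have huv : T < (1+δ)*T := by nlinarith
    have hlow := aux_lower ha hb hη ht₀ hz0.le hzt.le huv
    have hvη : ((1+δ)*T) ^ η = x * T ^ η := by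
      rw [Real.mul_rpow (by linarith) hT0.le, hδx]
    rw [hvη] at hlow
    have hbd : -(x * (a ^ (1 - η/(b+η)) * (((b+η)/b) * (b/η) ^ (η/(b+η))) * z ^ (η/(b+η))))
        ≤ -(T ^ (-b) * z) - a * (x * T ^ η) := by
      have hts := aux_tstar ha hb hη hz0
      rw [← hT] at hts
      have hA : 0 ≤ T ^ (-b) * z := mul_nonneg (Real.rpow_pos_of_pos hT0 _).le hz0.le
      nlinarith
    have hIlow : Real.exp (-(x * (a ^ (1 - η/(b+η)) * (((b+η)/b) * (b/η) ^ (η/(b+η)))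
          * z ^ (η/(b+η)))))
        < ∫ t in Ioi t₀, Real.exp (-(t ^ (-b) * z) - a * t ^ η) := by
      have h1 : Real.exp (-(x * (a ^ (1 - η/(b+η)) * (((b+η)/b) * (b/η) ^ (η/(b+η)))
            * z ^ (η/(b+η)))))
          ≤ Real.exp (-(T ^ (-b) * z) - a * (x * T ^ η)) := Real.exp_le_exp.2 hbd
      have h2 : ((1+δ)*T - T) = δ * T := by ring
      rw [h2] at hlow
      have h3 : Real.exp (-(T ^ (-b) * z) - a * (x * T ^ η))
          < δ * T * Real.exp (-(T ^ (-b) * z) - a * (x * T ^ η)) := by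
        nlinarith [Real.exp_pos (-(T ^ (-b) * z) - a * (x * T ^ η))]
      linarith
    have hden : -(a ^ (1 - η/(b+η)) * (((b+η)/b) * (b/η) ^ (η/(b+η))) * z ^ (η/(b+η))) < 0 :=
      neg_lt_zero.2 (mul_pos hc (Real.rpow_pos_of_pos hz0 (η/(b+η))))
    rw [div_lt_iff_of_neg hden]
    have hIpos := aux_pos ha hb hη ht₀ hz0.le (t₀ := t₀)
    have := (Real.lt_log_iff_exp_lt hIpos).2 hIlow
    linarith
end
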